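/- For every unit quaternion x and every purely imaginary quaternion y, the quaternion x * y * conj(x) is again purely imaginary and has the same norm as y; the resulting map ξ₀ sending x to the linear isometry y ↦ x * y * conj(x) of the space of purely imaginary quaternions is a group homomorphism from the group of unit quaternions to the group of linear isometric automorphisms of Im ℍ, its kernel is exactly {1, −1}, and its range is exactly the set of linear isometric automorphisms of Im ℍ with determinant 1; consequently ξ₀ induces a group isomorphism from (unit quaternions)/{±1} onto the rotation group SO(Im ℍ) ≅ SO(3). -/

import Mathlib

noncomputable section

open Quaternion

/-- The purely imaginary quaternions, as a real subspace of `ℍ[ℝ]`. -/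
def ImH : Submodule ℝ ℍ[ℝ] where
  carrier := {q | q.re = 0}
  add_mem' := by
    intro a b ha hb
    simp only [Set.mem_setOf_eq, Quaternion.re_add] at *
    simp [ha, hb]
  zero_mem' := by simp
  smul_mem' := by
    intro c a ha
    simp only [Set.mem_setOf_eq] at *
    simp [Quaternion.re_smul, ha]

lemma negOne_mem_unitary : (-1 : ℍ[ℝ]) ∈ unitary ℍ[ℝ] := by
  rw [Unitary.mem_iff]
  constructor <;> simp

namespace XiAux

lemma conj_re_zero (x y : ℍ[ℝ]) (hy : y.re = 0) : (x * y * star x).re = 0 := by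
  rw [← Quaternion.star_eq_neg] at hy ⊢
  simp only [star_mul, star_star, hy, mul_assoc, neg_mul, mul_neg]

lemma norm_one_of_unitary {x : ℍ[ℝ]} (hx : x ∈ unitary ℍ[ℝ]) : ‖x‖ = 1 := by
  have h1 : star x * x = 1 := (Unitary.mem_iff.mp hx).1
  have h2 : normSq x = 1 := by
    have := congrArg QuaternionAlgebra.re h1
    rwa [Quaternion.star_mul_self, Quaternion.re_coe, Quaternion.re_one] at this
  have h3 : ‖x‖ * ‖x‖ = 1 := by rw [← Quaternion.normSq_eq_norm_mul_self, h2]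
  nlinarith [norm_nonneg x]

lemma norm_conj {x : ℍ[ℝ]} (hx : x ∈ unitary ℍ[ℝ]) (y : ℍ[ℝ]) :
    ‖x * y * star x‖ = ‖y‖ := by
  rw [norm_mul, norm_mul, Quaternion.norm_star, norm_one_of_unitary hx]
  ring

/-- conjugation as a linear map on `ImH`. -/
def conjL (x : ℍ[ℝ]) : ImH →ₗ[ℝ] ImH where
  toFun y := ⟨x * y * star x, conj_re_zero x y y.2⟩
  map_add' a b := Subtype.ext (by simp [mul_add, add_mul])
  map_smul' c a := Subtype.ext (by simp [mul_smul_comm, smul_mul_assoc])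

@[simp] lemma conjL_coe (x : ℍ[ℝ]) (y : ImH) : (conjL x y : ℍ[ℝ]) = x * y * star x := rfl

lemma conjL_comp (x x' : ℍ[ℝ]) : (conjL x).comp (conjL x') = conjL (x * x') := by
  refine LinearMap.ext fun y => Subtype.ext ?_
  simp [mul_assoc]

lemma conjL_one : conjL 1 = LinearMap.id := by
  refine LinearMap.ext fun y => Subtype.ext ?_
  simp

/-- conjugation by a unitary quaternion as a linear isometry of `ImH`. -/
def xi (x : unitary ℍ[ℝ]) : ImH ≃ₗᵢ[ℝ] ImH where
  toLinearEquiv := LinearEquiv.ofLinear (conjL x) (conjL (star (x : ℍ[ℝ])))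
    (by rw [conjL_comp, Unitary.mul_star_self_of_mem x.2, conjL_one])
    (by rw [conjL_comp, Unitary.star_mul_self_of_mem x.2, conjL_one])
  norm_map' y := norm_conj x.2 y

@[simp] lemma xi_coe (x : unitary ℍ[ℝ]) (y : ImH) :
    ((xi x y : ImH) : ℍ[ℝ]) = (x : ℍ[ℝ]) * y * star (x : ℍ[ℝ]) := rfl

/-- ξ₀ as a monoid hom. -/
def xi0 : unitary ℍ[ℝ] →* (ImH ≃ₗᵢ[ℝ] ImH) where
  toFun := xi
  map_one' := by
    refine LinearIsometryEquiv.ext fun y => Subtype.ext ?_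
    simp
  map_mul' x y := by
    refine LinearIsometryEquiv.ext fun z => Subtype.ext ?_
    rw [LinearIsometryEquiv.coe_mul]
    show ((xi (x*y) z : ℍ[ℝ])) = ((xi x (xi y z) : ℍ[ℝ]))
    simp [mul_assoc]

@[simp] lemma xi0_coe (x : unitary ℍ[ℝ]) (y : ImH) :
    ((xi0 x y : ImH) : ℍ[ℝ]) = (x : ℍ[ℝ]) * y * star (x : ℍ[ℝ]) := rfl

lemma ker_xi0 : ((MonoidHom.ker xi0 : Subgroup (unitary ℍ[ℝ])) : Set (unitary ℍ[ℝ]))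
    = {1, ⟨-1, negOne_mem_unitary⟩} := by
  ext x
  simp only [SetLike.mem_coe, MonoidHom.mem_ker, Set.mem_insert_iff, Set.mem_singleton_iff]
  constructor
  · intro h
    have key : ∀ y : ℍ[ℝ], y.re = 0 → (x : ℍ[ℝ]) * y = y * (x : ℍ[ℝ]) := by
      intro y hy
      have h1 : ((xi0 x ⟨y, hy⟩ : ImH) : ℍ[ℝ]) = y := by rw [h]; rfl
      have h2 : (x : ℍ[ℝ]) * y * star (x : ℍ[ℝ]) = y := by rwa [xi0_coe] at h1
      have := congrArg (· * (x : ℍ[ℝ])) h2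
      simpa [mul_assoc, Unitary.star_mul_self_of_mem x.2] using this
    have hi := key ⟨0,1,0,0⟩ rfl
    have hj := key ⟨0,0,1,0⟩ rfl
    rw [Quaternion.ext_iff] at hi hj
    erw [Quaternion.re_mul, Quaternion.imI_mul, Quaternion.imJ_mul, Quaternion.imK_mul, Quaternion.re_mul, Quaternion.imI_mul, Quaternion.imJ_mul, Quaternion.imK_mul] at hi hj
    obtain ⟨hi1, hi2, hi3, hi4⟩ := hi
    obtain ⟨hj1, hj2, hj3, hj4⟩ := hj
    have hI : (x : ℍ[ℝ]).imI = 0 := by linarith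
    have hJ : (x : ℍ[ℝ]).imJ = 0 := by linarith
    have hK : (x : ℍ[ℝ]).imK = 0 := by linarith
    have hn : normSq (x : ℍ[ℝ]) = 1 := by
      have h1 : star (x : ℍ[ℝ]) * (x : ℍ[ℝ]) = 1 := Unitary.star_mul_self_of_mem x.2
      have := congrArg QuaternionAlgebra.re h1
      rwa [Quaternion.star_mul_self, Quaternion.re_coe, Quaternion.re_one] at this
    rw [Quaternion.normSq_def'] at hn
    rw [hI, hJ, hK] at hn
    have : (x : ℍ[ℝ]).re = 1 ∨ (x : ℍ[ℝ]).re = -1 := by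
      have h2 : ((x : ℍ[ℝ]).re - 1) * ((x : ℍ[ℝ]).re + 1) = 0 := by nlinarith
      rcases mul_eq_zero.mp h2 with h | h
      · left; linarith
      · right; linarith
    rcases this with h | h
    · left
      exact Subtype.ext (Quaternion.ext_iff.mpr ⟨by simpa using h, by simpa using hI,
        by simpa using hJ, by simpa using hK⟩)
    · right
      exact Subtype.ext (Quaternion.ext_iff.mpr ⟨by simpa using h, by simpa using hI,
        by simpa using hJ, by simpa using hK⟩)
  · rintro (rfl | rfl)
    · exact map_one xi0
    · refine LinearIsometryEquiv.ext fun y => Subtype.ext ?_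
      show ((-1 : ℍ[ℝ]) * y * star (-1 : ℍ[ℝ])) = (y : ℍ[ℝ])
      simp

open Module

lemma finrank_ImH : finrank ℝ ImH = 3 := by
  let reL : ℍ[ℝ] →ₗ[ℝ] ℝ :=
    { toFun := QuaternionAlgebra.re
      map_add' := fun a b => rfl
      map_smul' := fun c a => rfl }
  have hker : ImH = LinearMap.ker reL := by
    ext q; simp [ImH, reL, LinearMap.mem_ker]; rfl
  have hsurj : Function.Surjective reL := fun r => ⟨(r : ℍ[ℝ]), by simp [reL]; rfl⟩
  have := LinearMap.finrank_range_add_finrank_ker reL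
  rw [LinearMap.range_eq_top.mpr hsurj, Quaternion.finrank_eq_four] at this
  have h1 : finrank ℝ (⊤ : Submodule ℝ ℝ) = 1 := by simp
  rw [hker]
  omega

lemma sq_eq_negOne {u : ℍ[ℝ]} (hu : u.re = 0) (hn : ‖u‖ = 1) : u * u = -1 := by
  have hs : star u = -u := Quaternion.star_eq_neg.mpr hu
  have h2 : u * star u = normSq u := Quaternion.self_mul_star u
  have h3 : normSq u = 1 := by
    rw [Quaternion.normSq_eq_norm_mul_self, hn]; norm_num
  rw [hs, mul_neg, h3] at h2
  simpa [neg_eq_iff_eq_neg] using h2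

lemma mem_unitary_of_im {u : ℍ[ℝ]} (hu : u.re = 0) (hn : ‖u‖ = 1) :
    u ∈ unitary ℍ[ℝ] := by
  have hs : star u = -u := Quaternion.star_eq_neg.mpr hu
  have h := sq_eq_negOne hu hn
  rw [Unitary.mem_iff, hs]
  constructor <;> simp [h]

lemma anticomm {u y : ℍ[ℝ]} (hu : u.re = 0) (hy : y.re = 0)
    (ho : (u * star y).re = 0) : u * y = -(y * u) := by
  have h1 : u * y + star (u * y) = 2 * ((u * y).re : ℍ[ℝ]) := Quaternion.self_add_star _
  have hre : (u * y).re = 0 := by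
    rw [Quaternion.star_eq_neg.mpr hy, mul_neg, Quaternion.re_neg, neg_eq_zero] at ho
    exact ho
  rw [hre, star_mul, Quaternion.star_eq_neg.mpr hu, Quaternion.star_eq_neg.mpr hy] at h1
  simp only [Quaternion.coe_zero, mul_zero, neg_mul_neg] at h1
  exact eq_neg_of_add_eq_zero_left h1

open scoped RealInnerProductSpace

lemma xi_im (u : ℍ[ℝ]) (hu : u.re = 0) (hn : ‖u‖ = 1) (y : ImH) :
    xi ⟨u, mem_unitary_of_im hu hn⟩ y
      = - (Submodule.reflection (ℝ ∙ (⟨u, hu⟩ : ImH))ᗮ y) := by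
  obtain ⟨a, ha, b, hb, rfl⟩ :=
    Submodule.exists_add_mem_mem_orthogonal (K := ((ℝ ∙ (⟨u, hu⟩ : ImH)) : Submodule ℝ ImH)) y
  have hxa : xi ⟨u, mem_unitary_of_im hu hn⟩ a = a := by
    obtain ⟨c, hc⟩ := Submodule.mem_span_singleton.mp ha
    refine Subtype.ext ?_
    rw [xi_coe, ← hc]
    have : ((c • (⟨u, hu⟩ : ImH) : ImH) : ℍ[ℝ]) = c • u := rfl
    rw [this, Quaternion.star_eq_neg.mpr hu]
    rw [mul_smul_comm, smul_mul_assoc, mul_neg, mul_assoc, sq_eq_negOne hu hn]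
    simp
  have hxb : xi ⟨u, mem_unitary_of_im hu hn⟩ b = -b := by
    have hinner : ⟪(⟨u, hu⟩ : ImH), b⟫ = 0 :=
      (Submodule.mem_orthogonal _ _).mp hb _ (Submodule.mem_span_singleton_self _)
    have hinner' : (u * star (b : ℍ[ℝ])).re = 0 := by
      rw [← Quaternion.inner_def]
      exact hinner
    have hac := anticomm hu b.2 hinner'
    refine Subtype.ext ?_
    rw [xi_coe, Quaternion.star_eq_neg.mpr hu, mul_neg, hac]
    rw [neg_mul, neg_neg, mul_assoc, sq_eq_negOne hu hn]
    simp
  have hra : Submodule.reflection (ℝ ∙ (⟨u, hu⟩ : ImH))ᗮ a = -a :=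
    Submodule.reflection_mem_subspace_orthogonalComplement_eq_neg
      (by rwa [Submodule.orthogonal_orthogonal])
  have hrb : Submodule.reflection (ℝ ∙ (⟨u, hu⟩ : ImH))ᗮ b = b :=
    Submodule.reflection_mem_subspace_eq_self hb
  rw [map_add, map_add, hxa, hxb, hra, hrb]
  abel

/-- determinant of an isometry of ImH. -/
def D (f : ImH ≃ₗᵢ[ℝ] ImH) : ℝ := LinearMap.det (f.toLinearEquiv : ImH →ₗ[ℝ] ImH)

lemma D_mul (f g : ImH ≃ₗᵢ[ℝ] ImH) : D (f * g) = D f * D g := by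
  unfold D
  rw [← LinearMap.det_comp]
  congr 1

lemma D_one : D 1 = 1 := by
  unfold D
  have : ((1 : ImH ≃ₗᵢ[ℝ] ImH).toLinearEquiv : ImH →ₗ[ℝ] ImH) = LinearMap.id := rfl
  rw [this, LinearMap.det_id]

lemma D_reflection (v : ImH) (hv : v ≠ 0) : D (Submodule.reflection (ℝ ∙ v)ᗮ) = -1 := by
  unfold D
  have h := Submodule.det_reflection ((ℝ ∙ v)ᗮ : Submodule ℝ ImH)
  rw [Submodule.orthogonal_orthogonal, finrank_span_singleton hv, pow_one] at h
  exact h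

lemma xi_im_toLinearMap (u : ℍ[ℝ]) (hu : u.re = 0) (hn : ‖u‖ = 1) :
    ((xi ⟨u, mem_unitary_of_im hu hn⟩).toLinearEquiv : ImH →ₗ[ℝ] ImH)
      = (-1 : ℝ) • ((Submodule.reflection (ℝ ∙ (⟨u, hu⟩ : ImH))ᗮ).toLinearEquiv : ImH →ₗ[ℝ] ImH) := by
  refine LinearMap.ext fun y => ?_
  simpa using xi_im u hu hn y

lemma D_xi_im (u : ℍ[ℝ]) (hu : u.re = 0) (hn : ‖u‖ = 1) :
    D (xi ⟨u, mem_unitary_of_im hu hn⟩) = 1 := by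
  unfold D
  rw [xi_im_toLinearMap u hu hn, LinearMap.det_smul]
  have h := D_reflection ⟨u, hu⟩ (by
    intro h0
    rw [show u = ((⟨u, hu⟩ : ImH) : ℍ[ℝ]) from rfl, h0] at hn
    simp at hn)
  unfold D at h
  rw [h, finrank_ImH]
  norm_num

lemma norm_eq_one_of_normSq_one {v : ℍ[ℝ]} (h : normSq v = 1) : ‖v‖ = 1 := by
  have h3 : ‖v‖ * ‖v‖ = 1 := by rw [← Quaternion.normSq_eq_norm_mul_self, h]
  nlinarith [norm_nonneg v]

lemma exists_decomp (x : ℍ[ℝ]) (hx : x ∈ unitary ℍ[ℝ]) :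
    ∃ p v : ℍ[ℝ], p.re = 0 ∧ v.re = 0 ∧ ‖p‖ = 1 ∧ ‖v‖ = 1 ∧ x = p * v := by
  have hxn : ‖x‖ = 1 := norm_one_of_unitary hx
  obtain ⟨v, hv, hvn, hdot⟩ : ∃ v : ℍ[ℝ], v.re = 0 ∧ ‖v‖ = 1 ∧
      x.imI * v.imI + x.imJ * v.imJ + x.imK * v.imK = 0 := by
    by_cases h : x.imI = 0 ∧ x.imJ = 0
    · refine ⟨⟨0, 1, 0, 0⟩, rfl, norm_eq_one_of_normSq_one ?_, ?_⟩
      · rw [Quaternion.normSq_def' (a := (⟨0, 1, 0, 0⟩ : ℍ[ℝ]))]; norm_num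
      · simp [h.1]
    · have hn2 : x.imI ^ 2 + x.imJ ^ 2 > 0 := by
        rcases not_and_or.mp h with h1 | h1 <;> positivity
      set n := Real.sqrt (x.imI ^ 2 + x.imJ ^ 2) with hndef
      have hn0 : n > 0 := Real.sqrt_pos.mpr hn2
      have hnsq : n ^ 2 = x.imI ^ 2 + x.imJ ^ 2 := Real.sq_sqrt hn2.le
      refine ⟨⟨0, x.imJ / n, -x.imI / n, 0⟩, rfl, norm_eq_one_of_normSq_one ?_, by ring⟩
      rw [Quaternion.normSq_def' (a := (⟨0, x.imJ / n, -x.imI / n, 0⟩ : ℍ[ℝ]))]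
      field_simp
      linarith [hnsq]
  refine ⟨-(x * v), v, ?_, hv, ?_, hvn, ?_⟩
  · rw [Quaternion.re_neg, Quaternion.re_mul, hv]
    rw [mul_zero]
    linarith [hdot]
  · rw [norm_neg, norm_mul, hxn, hvn]; ring
  · rw [neg_mul, mul_assoc, sq_eq_negOne hv hvn]
    simp

lemma D_xi0 (x : unitary ℍ[ℝ]) : D (xi0 x) = 1 := by
  obtain ⟨p, v, hp, hv, hpn, hvn, heq⟩ := exists_decomp (x : ℍ[ℝ]) x.2
  have hx : x = ⟨p, mem_unitary_of_im hp hpn⟩ * ⟨v, mem_unitary_of_im hv hvn⟩ :=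
    Subtype.ext heq
  rw [hx, map_mul, D_mul]
  rw [show xi0 ⟨p, mem_unitary_of_im hp hpn⟩ = xi ⟨p, mem_unitary_of_im hp hpn⟩ from rfl]
  rw [show xi0 ⟨v, mem_unitary_of_im hv hvn⟩ = xi ⟨v, mem_unitary_of_im hv hvn⟩ from rfl]
  rw [D_xi_im p hp hpn, D_xi_im v hv hvn]
  norm_num

set_option maxHeartbeats 1000000 in
lemma reflection_congr {K K' : Submodule ℝ ImH} [K.HasOrthogonalProjection]
    [K'.HasOrthogonalProjection] (h : K = K') : Submodule.reflection K = Submodule.reflection K' := by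
  subst h; rfl

set_option maxHeartbeats 1000000 in
lemma refl_pair_eq (u v : ImH) (hnu : ‖(u : ℍ[ℝ])‖ = 1) (hnv : ‖(v : ℍ[ℝ])‖ = 1) :
    xi0 (⟨(u : ℍ[ℝ]), mem_unitary_of_im u.2 hnu⟩ * ⟨(v : ℍ[ℝ]), mem_unitary_of_im v.2 hnv⟩)
      = Submodule.reflection ((ℝ ∙ u)ᗮ : Submodule ℝ ImH) * Submodule.reflection (ℝ ∙ v)ᗮ := by
  rw [map_mul]
  refine LinearIsometryEquiv.ext fun y => ?_
  rw [LinearIsometryEquiv.coe_mul, LinearIsometryEquiv.coe_mul]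
  show xi ⟨(u : ℍ[ℝ]), mem_unitary_of_im u.2 hnu⟩ (xi ⟨(v : ℍ[ℝ]), mem_unitary_of_im v.2 hnv⟩ y)
    = Submodule.reflection ((ℝ ∙ u)ᗮ : Submodule ℝ ImH) (Submodule.reflection ((ℝ ∙ v)ᗮ : Submodule ℝ ImH) y)
  rw [xi_im (v : ℍ[ℝ]) v.2 hnv y, map_neg, xi_im (u : ℍ[ℝ]) u.2 hnu, neg_neg]

lemma pair_mem (u v : ImH) (hu : u ≠ 0) (hv : v ≠ 0) :
    Submodule.reflection ((ℝ ∙ u)ᗮ : Submodule ℝ ImH) * Submodule.reflection (ℝ ∙ v)ᗮ ∈ MonoidHom.range xi0 := by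
  have key : ∀ w : ImH, w ≠ 0 → ‖(((‖w‖⁻¹ • w : ImH)) : ℍ[ℝ])‖ = 1 := by
    intro w hw
    have h1 : ‖(‖w‖⁻¹ • w : ImH)‖ = 1 := by
      rw [norm_smul, norm_inv, norm_norm, inv_mul_cancel₀ (norm_ne_zero_iff.mpr hw)]
    rw [← Submodule.norm_coe] at h1
    exact h1
  have hspan : ∀ w : ImH, w ≠ 0 → (ℝ ∙ (‖w‖⁻¹ • w : ImH)) = ℝ ∙ w := fun w hw =>
    Submodule.span_singleton_smul_eq
      (isUnit_iff_ne_zero.mpr (inv_ne_zero (norm_ne_zero_iff.mpr hw))) w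
  refine ⟨⟨((‖u‖⁻¹ • u : ImH) : ℍ[ℝ]), mem_unitary_of_im (‖u‖⁻¹ • u : ImH).2 (key u hu)⟩
    * ⟨((‖v‖⁻¹ • v : ImH) : ℍ[ℝ]), mem_unitary_of_im (‖v‖⁻¹ • v : ImH).2 (key v hv)⟩, ?_⟩
  rw [refl_pair_eq _ _ (key u hu) (key v hv),
    reflection_congr (congrArg Submodule.orthogonal (hspan u hu)),
    reflection_congr (congrArg Submodule.orthogonal (hspan v hv))]

lemma refl_zero : Submodule.reflection ((ℝ ∙ (0 : ImH))ᗮ : Submodule ℝ ImH) = 1 := by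
  have h : ((ℝ ∙ (0 : ImH))ᗮ : Submodule ℝ ImH) = ⊤ := by
    rw [Submodule.span_zero_singleton, Submodule.bot_orthogonal_eq_top]
  rw [reflection_congr h]
  exact LinearIsometryEquiv.ext fun y => Submodule.reflection_mem_subspace_eq_self Submodule.mem_top

set_option maxHeartbeats 1000000 in
lemma mem_range_of_det_one (f : ImH ≃ₗᵢ[ℝ] ImH) (hf : D f = 1) :
    f ∈ MonoidHom.range xi0 := by
  obtain ⟨l, -, rfl⟩ := f.reflections_generate_dim
  have main : ∀ l : List ImH,
      (l.map fun w => Submodule.reflection ((ℝ ∙ w)ᗮ : Submodule ℝ ImH)).prod ∈ MonoidHom.range xi0 ∨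
      ∃ w : ImH, w ≠ 0 ∧ ∃ h ∈ MonoidHom.range xi0,
        (l.map fun w => Submodule.reflection ((ℝ ∙ w)ᗮ : Submodule ℝ ImH)).prod
          = Submodule.reflection ((ℝ ∙ w)ᗮ : Submodule ℝ ImH) * h := by
    intro l
    induction l with
    | nil => exact Or.inl (one_mem _)
    | cons v t ih =>
      rw [List.map_cons, List.prod_cons]
      by_cases hv : v = 0
      · subst hv
        rw [refl_zero, one_mul]
        exact ih
      · rcases ih with ih | ⟨w, hw, h, hh, heq⟩
        · exact Or.inr ⟨v, hv, _, ih, rfl⟩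
        · left
          rw [heq, ← mul_assoc]
          exact mul_mem (pair_mem v w hv hw) hh
  rcases main l with h | ⟨w, hw, h, hh, heq⟩
  · exact h
  · exfalso
    obtain ⟨x, rfl⟩ := hh
    rw [heq, D_mul, D_reflection w hw, D_xi0] at hf
    norm_num at hf

end XiAux

open XiAux in
/-- For every unit quaternion `x` and purely imaginary quaternion `y`, the quaternion
`x * y * conj x` is purely imaginary with the same norm as `y`; the map
`ξ₀ : x ↦ (y ↦ x * y * conj x)` is a group homomorphism from the unit quaternions to the
linear isometric automorphisms of `Im ℍ`, with kernel exactly `{1, -1}` and range exactly the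
isometries of determinant `1`; consequently it induces a group isomorphism from
`(unit quaternions)/{±1}` onto `SO(Im ℍ) ≅ SO(3)`. -/
theorem xi0_spin3_so3 :
    (∀ x : unitary ℍ[ℝ], ∀ y : ℍ[ℝ], y.re = 0 →
      ((x : ℍ[ℝ]) * y * star (x : ℍ[ℝ])).re = 0 ∧
      ‖(x : ℍ[ℝ]) * y * star (x : ℍ[ℝ])‖ = ‖y‖) ∧
    ∃ ξ₀ : unitary ℍ[ℝ] →* (ImH ≃ₗᵢ[ℝ] ImH),
      (∀ (x : unitary ℍ[ℝ]) (y : ImH),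
        ((ξ₀ x y : ImH) : ℍ[ℝ]) = (x : ℍ[ℝ]) * (y : ℍ[ℝ]) * star (x : ℍ[ℝ])) ∧
      ((MonoidHom.ker ξ₀ : Subgroup (unitary ℍ[ℝ])) : Set (unitary ℍ[ℝ]))
        = {1, ⟨-1, negOne_mem_unitary⟩} ∧
      (Set.range ξ₀
        = {f : ImH ≃ₗᵢ[ℝ] ImH | LinearMap.det (f.toLinearEquiv : ImH →ₗ[ℝ] ImH) = 1}) ∧
      Nonempty ((unitary ℍ[ℝ] ⧸ MonoidHom.ker ξ₀) ≃* MonoidHom.range ξ₀) := by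
  refine ⟨fun x y hy => ⟨conj_re_zero x y hy, norm_conj x.2 y⟩,
    xi0, fun x y => xi0_coe x y, ker_xi0, ?_, ⟨QuotientGroup.quotientKerEquivRange xi0⟩⟩
  ext f
  constructor
  · rintro ⟨x, rfl⟩
    exact D_xi0 x
  · intro hf
    obtain ⟨x, hx⟩ := mem_range_of_det_one f hf
    exact ⟨x, hx⟩


end
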